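/- For any affine permutation w̃ of size n and any integer k ≥ 0, the number of affine transpositions ((i,j)) with 1 ≤ i ≤ n, i < j, and ⌊(w̃(j) − w̃(i))/n⌋ = k equals the corresponding number for w̃⁻¹. In particular, w̃ and w̃⁻¹ have the same inversion partition. -/

import Mathlib

/-- Reduce an integer into `[1, n]` modulo `n`. -/
def resn (n : ℕ) (x : ℤ) : ℤ := (x - 1) % (n : ℤ) + 1

/-- The bijection between inversion sets of `f` and `f.symm` at level `k`. -/
def phiMap (n k : ℕ) (f : Equiv.Perm ℤ) (p : ℤ × ℤ) : ℤ × ℤ :=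
  (resn n (f p.2),
    resn n (f p.1) +
      ((k : ℤ) - (f.symm (resn n (f p.1)) - f.symm (resn n (f p.2))) / (n : ℤ)) * (n : ℤ))

lemma resn_one_le {n : ℕ} (hN : (0:ℤ) < n) (x : ℤ) : 1 ≤ resn n x := by
  have := Int.emod_nonneg (x - 1) (ne_of_gt hN)
  unfold resn; omega

lemma resn_le {n : ℕ} (hN : (0:ℤ) < n) (x : ℤ) : resn n x ≤ n := by
  have := Int.emod_lt_of_pos (x - 1) hN
  unfold resn; omega

lemma resn_spec {n : ℕ} (hN : (0:ℤ) < n) (x : ℤ) :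
    x = resn n x + ((x - 1) / n) * n := by
  have h := Int.emod_add_mul_ediv (x - 1) (n : ℤ)
  unfold resn
  rw [mul_comm]
  linarith

lemma resn_eq_self {n : ℕ} (hN : (0:ℤ) < n) {x : ℤ} (h1 : 1 ≤ x) (h2 : x ≤ n) :
    resn n x = x := by
  unfold resn
  rw [Int.emod_eq_of_lt (by omega) (by omega)]
  ring

lemma resn_add_mul {n : ℕ} (x c : ℤ) : resn n (x + c * n) = resn n x := by
  unfold resn
  rw [show x + c * n - 1 = x - 1 + c * n by ring, Int.add_mul_emod_self_right]

lemma apply_shift {n : ℕ} (f : Equiv.Perm ℤ) (h1 : ∀ m : ℤ, f (m + n) = f m + n)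
    (x c : ℤ) : f (x + c * n) = f x + c * n := by
  have h1' : ∀ y : ℤ, f (y - n) = f y - n := by
    intro y
    have := h1 (y - n)
    rw [show y - (n:ℤ) + n = y by ring] at this
    linarith
  induction c using Int.induction_on with
  | zero => simp
  | succ i ih =>
    rw [show x + ((i:ℤ) + 1) * n = (x + i * n) + n by ring, h1, ih]; ring
  | pred i ih =>
    rw [show x + (-(i:ℤ) - 1) * n = (x + (-i) * n) - n by ring, h1', ih]; ring

lemma symm_shift {n : ℕ} (f : Equiv.Perm ℤ) (h1 : ∀ m : ℤ, f (m + n) = f m + n)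
    (x c : ℤ) : f.symm (x + c * n) = f.symm x + c * n := by
  apply f.injective
  rw [Equiv.apply_symm_apply, apply_shift f h1, Equiv.apply_symm_apply]

lemma h1_symm {n : ℕ} (f : Equiv.Perm ℤ) (h1 : ∀ m : ℤ, f (m + n) = f m + n)
    (m : ℤ) : f.symm (m + n) = f.symm m + n := by
  have := symm_shift f h1 m 1
  rwa [one_mul] at this

lemma phi_mem {n k : ℕ} (hN : (0:ℤ) < n) (f : Equiv.Perm ℤ)
    (h1 : ∀ m : ℤ, f (m + n) = f m + n) (p : ℤ × ℤ)
    (hp : 1 ≤ p.1 ∧ p.1 ≤ n ∧ p.1 < p.2 ∧ (f p.2 - f p.1) / (n:ℤ) = k) :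
    1 ≤ (phiMap n k f p).1 ∧ (phiMap n k f p).1 ≤ n ∧
      (phiMap n k f p).1 < (phiMap n k f p).2 ∧
      (f.symm (phiMap n k f p).2 - f.symm (phiMap n k f p).1) / (n:ℤ) = k := by
  obtain ⟨i, j⟩ := p
  obtain ⟨hi1, hi2, hij, hlev⟩ := hp
  simp only at hi1 hi2 hij hlev ⊢
  set a := resn n (f j) with ha_def
  set b := resn n (f i) with hb_def
  set s := (f j - 1) / (n:ℤ) with hs_def
  set t := (f i - 1) / (n:ℤ) with ht_def
  have hfj : f j = a + s * n := resn_spec hN (f j)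
  have hfi : f i = b + t * n := resn_spec hN (f i)
  have hfsa : f.symm a = j - s * n := by
    rw [show a = f j + (-s) * n by rw [hfj]; ring, symm_shift f h1, Equiv.symm_apply_apply]
    ring
  have hfsb : f.symm b = i - t * n := by
    rw [show b = f i + (-t) * n by rw [hfi]; ring, symm_shift f h1, Equiv.symm_apply_apply]
    ring
  have hE : (f.symm b - f.symm a) / (n:ℤ) = (i - j) / n + (s - t) := by
    rw [hfsa, hfsb, show i - t * n - (j - s * n) = (i - j) + (s - t) * n by ring,
      Int.add_mul_ediv_right _ _ (ne_of_gt hN)]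
  have hne : (n:ℤ) ≠ 0 := ne_of_gt hN
  refine ⟨resn_one_le hN _, resn_le hN _, ?_, ?_⟩
  · -- a < b + (k - E/n) * n
    show a < b + ((k : ℤ) - (f.symm b - f.symm a) / (n:ℤ)) * n
    rw [hE]
    have hlt : f j - f i < ((k:ℤ) + 1) * n := by
      have := Int.lt_ediv_add_one_mul_self (f j - f i) hN
      rwa [hlev] at this
    have hd : (i - j) / (n:ℤ) < 0 := Int.ediv_neg_of_neg_of_pos (by omega) hN
    have key : ((k:ℤ) + 1) * n ≤ ((k:ℤ) - (i - j) / n) * n := by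
      apply mul_le_mul_of_nonneg_right _ (le_of_lt hN)
      omega
    have ha' : a = f j - s * n := by rw [hfj]; ring
    have hb' : b = f i - t * n := by rw [hfi]; ring
    rw [ha', hb']
    nlinarith [key, hlt]
  · show (f.symm (b + ((k : ℤ) - (f.symm b - f.symm a) / (n:ℤ)) * n) - f.symm a) / (n:ℤ) = k
    rw [symm_shift f h1,
      show f.symm b + ((k : ℤ) - (f.symm b - f.symm a) / (n:ℤ)) * n - f.symm a
        = (f.symm b - f.symm a) + ((k : ℤ) - (f.symm b - f.symm a) / (n:ℤ)) * n by ring,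
      Int.add_mul_ediv_right _ _ hne]
    ring

lemma phi_comp {n k : ℕ} (hN : (0:ℤ) < n) (f : Equiv.Perm ℤ)
    (h1 : ∀ m : ℤ, f (m + n) = f m + n) (p : ℤ × ℤ)
    (hi1 : 1 ≤ p.1) (hi2 : p.1 ≤ n)
    (hlev : (f p.2 - f p.1) / (n:ℤ) = k) :
    phiMap n k f.symm (phiMap n k f p) = p := by
  obtain ⟨i, j⟩ := p
  simp only at hi1 hi2 hlev
  set a := resn n (f j) with ha_def
  set b := resn n (f i) with hb_def
  set s := (f j - 1) / (n:ℤ) with hs_def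
  set t := (f i - 1) / (n:ℤ) with ht_def
  have hfj : f j = a + s * n := resn_spec hN (f j)
  have hfi : f i = b + t * n := resn_spec hN (f i)
  have hfsa : f.symm a = j - s * n := by
    rw [show a = f j + (-s) * n by rw [hfj]; ring, symm_shift f h1, Equiv.symm_apply_apply]
    ring
  have hfsb : f.symm b = i - t * n := by
    rw [show b = f i + (-t) * n by rw [hfi]; ring, symm_shift f h1, Equiv.symm_apply_apply]
    ring
  set u := (j - 1) / (n:ℤ) with hu_def
  have hj0 : j = resn n j + u * n := resn_spec hN j
  have hne : (n:ℤ) ≠ 0 := ne_of_gt hN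
  -- the components of phiMap n k f (i, j)
  show phiMap n k f.symm
      (a, b + ((k : ℤ) - (f.symm b - f.symm a) / (n:ℤ)) * n) = (i, j)
  set P := (k : ℤ) - (f.symm b - f.symm a) / (n:ℤ) with hP_def
  have hc1 : f.symm (b + P * n) = i + (P - t) * n := by
    rw [symm_shift f h1, hfsb]; ring
  have hfj0 : f (resn n j) = f j - u * n := by
    rw [show resn n j = j + (-u) * n by linarith [hj0], apply_shift f h1]
    ring
  unfold phiMap
  simp only [Equiv.symm_symm]
  rw [hc1, resn_add_mul, resn_eq_self hN hi1 hi2, hfsa,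
    show j - s * n = j + (-s) * n by ring, resn_add_mul]
  refine Prod.ext rfl ?_
  simp only
  rw [hfj0, show f j - u * n - f i = (f j - f i) + (-u) * n by ring,
    Int.add_mul_ediv_right _ _ hne, hlev]
  have := hj0
  push_cast
  linarith

theorem inversion_partition_symm (n : ℕ) (hn : 1 ≤ n) (f : Equiv.Perm ℤ)
    (h1 : ∀ k : ℤ, f (k + n) = f k + n)
    (h2 : ∑ i ∈ Finset.Icc (1 : ℤ) (n : ℤ), f i = n * (n + 1) / 2)
    (k : ℕ) :
    Nat.card {p : ℤ × ℤ // 1 ≤ p.1 ∧ p.1 ≤ n ∧ p.1 < p.2 ∧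
        Int.fdiv (f p.2 - f p.1) (n : ℤ) = (k : ℤ)}
      = Nat.card {p : ℤ × ℤ // 1 ≤ p.1 ∧ p.1 ≤ n ∧ p.1 < p.2 ∧
          Int.fdiv (f.symm p.2 - f.symm p.1) (n : ℤ) = (k : ℤ)} := by
  have hN : (0:ℤ) < n := by exact_mod_cast hn
  have h1s : ∀ m : ℤ, f.symm (m + n) = f.symm m + n := h1_symm f h1
  have hfd : ∀ x : ℤ, Int.fdiv x (n:ℤ) = x / n := fun x => Int.fdiv_eq_ediv_of_nonneg x (le_of_lt hN)
  refine Nat.card_congr ?_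
  refine
    { toFun := fun x => ⟨phiMap n k f x.1, ?_⟩
      invFun := fun y => ⟨phiMap n k f.symm y.1, ?_⟩
      left_inv := fun x => ?_
      right_inv := fun y => ?_ }
  · obtain ⟨p, hp⟩ := x
    rw [hfd] at hp ⊢
    exact phi_mem hN f h1 p hp
  · obtain ⟨p, hp⟩ := y
    rw [hfd] at hp ⊢
    have := phi_mem hN f.symm h1s p hp
    simpa using this
  · obtain ⟨p, hp⟩ := x
    rw [hfd] at hp
    exact Subtype.ext (phi_comp hN f h1 p hp.1 hp.2.1 hp.2.2.2)
  · obtain ⟨p, hp⟩ := y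
    rw [hfd] at hp
    have := phi_comp hN f.symm h1s p hp.1 hp.2.1 hp.2.2.2
    simpa using this
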